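/- Let a=(a_1,...,a_n) be a weakly increasing real sequence and let e=(e_1,...,e_n) be an arbitrary real sequence. If e is not a restricted growth sequence relative to a (in the cap sense for weakly increasing a), then some entry of the matrix M_{e→a} is negative. -/

import Mathlib

open Polynomial Finset

/-- `IsCOB n a e M` says that `M` is the change-of-basis matrix `M_{e→a}`:
for each `0 ≤ m ≤ n`, the entry `M m k` is the coefficient of `∏_{i=1}^k (x - a_i)`
in the expansion of `∏_{i=1}^m (x - e_i)` in the basis
`1, (x-a₁), …, ∏_{i=1}^n (x-a_i)`.  (Sequences are 0-indexed: `a i` is `a_{i+1}`.)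
Since that basis expansion is unique, this characterizes `M_{e→a}` uniquely. -/
def IsCOB (n : ℕ) (a e : ℕ → ℝ) (M : Matrix (Fin (n+1)) (Fin (n+1)) ℝ) : Prop :=
  ∀ m : Fin (n+1),
    (∏ i ∈ Finset.range (m : ℕ), (X - C (e i))) =
      ∑ k : Fin (n+1), C (M m k) * ∏ i ∈ Finset.range (k : ℕ), (X - C (a i))

/-- The cap-index function for the restricted-growth condition (0-indexed version of
`f` with `f(1) = 1`): `capF a e i` is `f(i+1) - 1`, so the cap for `e i` is
`a (capF a e i)`.  The index increments exactly when `e_i` equals its cap. -/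
noncomputable def capF (a e : ℕ → ℝ) : ℕ → ℕ
  | 0 => 0
  | i + 1 => if e i = a (capF a e i) then capF a e i + 1 else capF a e i

/-- `e` is a restricted growth sequence relative to (weakly increasing) `a`
(cap sense): each `e_i` is at most its cap `a_{f(i)}`. -/
def IsRGCap (n : ℕ) (a e : ℕ → ℝ) : Prop :=
  ∀ i, i < n → e i ≤ a (capF a e i)

/-- Explicit recursive description of the change-of-basis coefficients. -/
noncomputable def W (a e : ℕ → ℝ) : ℕ → ℕ → ℝ
  | 0, 0 => 1
  | 0, _+1 => 0
  | m+1, 0 => (a 0 - e m) * W a e m 0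
  | m+1, k+1 => W a e m k + (a (k+1) - e m) * W a e m (k+1)

lemma Wzero (a e : ℕ → ℝ) : ∀ m k, m < k → W a e m k = 0 := by
  intro m
  induction m with
  | zero => intro k hk; match k, hk with | k+1, _ => rfl
  | succ m ih =>
    intro k hk
    match k, hk with
    | k+1, hk =>
      have h1 : W a e m k = 0 := ih k (by omega)
      have h2 : W a e m (k+1) = 0 := ih (k+1) (by omega)
      show W a e m k + (a (k+1) - e m) * W a e m (k+1) = 0
      rw [h1, h2]; ring

lemma Nk_monic (a : ℕ → ℝ) (k : ℕ) : (∏ i ∈ Finset.range k, (X - C (a i))).Monic :=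
  monic_prod_of_monic _ _ fun i _ => monic_X_sub_C (a i)

lemma Nk_deg (a : ℕ → ℝ) (k : ℕ) : (∏ i ∈ Finset.range k, (X - C (a i))).natDegree = k := by
  rw [natDegree_prod]
  · simp
  · intro i _; exact X_sub_C_ne_zero (a i)

/-- Uniqueness of coefficients in the Newton-type basis. -/
lemma uniq (n : ℕ) (a : ℕ → ℝ) (c : Fin (n+1) → ℝ)
    (hc : ∑ k : Fin (n+1), C (c k) * ∏ i ∈ Finset.range (k:ℕ), (X - C (a i)) = 0) :
    ∀ k, c k = 0 := by
  by_contra hne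
  push_neg at hne
  obtain ⟨k0, hk0⟩ := hne
  have hS : (Finset.univ.filter (fun k : Fin (n+1) => c k ≠ 0)).Nonempty :=
    ⟨k0, by simp [hk0]⟩
  set K := (Finset.univ.filter (fun k : Fin (n+1) => c k ≠ 0)).max' hS with hK
  have hKne : c K ≠ 0 := by
    have h := (Finset.univ.filter (fun k : Fin (n+1) => c k ≠ 0)).max'_mem hS
    rw [← hK] at h
    simpa using (Finset.mem_filter.mp h).2
  have hmax : ∀ j : Fin (n+1), (K:ℕ) < (j:ℕ) → c j = 0 := by
    intro j hj
    by_contra hcj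
    have hjS : j ∈ Finset.univ.filter (fun k : Fin (n+1) => c k ≠ 0) := by simp [hcj]
    have hle := Finset.le_max' _ j hjS
    rw [← hK] at hle
    exact absurd hj (not_lt.mpr hle)
  have h0 := congrArg (fun p => Polynomial.coeff p (K:ℕ)) hc
  simp only [finset_sum_coeff, coeff_C_mul, coeff_zero] at h0
  rw [Finset.sum_eq_single K] at h0
  · have hc1 : (∏ i ∈ Finset.range (K:ℕ), (X - C (a i))).coeff (K:ℕ) = 1 := by
      have h := (Nk_monic a (K:ℕ)).coeff_natDegree
      rwa [Nk_deg] at h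
    rw [hc1, mul_one] at h0
    exact hKne h0
  · intro j _ hjK
    rcases lt_trichotomy ((j:ℕ)) ((K:ℕ)) with h | h | h
    · rw [coeff_eq_zero_of_natDegree_lt (by rw [Nk_deg]; exact h), mul_zero]
    · exact absurd (Fin.ext h) hjK
    · rw [hmax j h, zero_mul]
  · intro hKu; exact absurd (Finset.mem_univ K) hKu

/-- The Newton-basis expansion of `∏_{i<m} (X - e_i)` is given by `W`. -/
lemma expand (a e : ℕ → ℝ) (m : ℕ) :
    ∏ i ∈ Finset.range m, (X - C (e i)) =
      ∑ k ∈ Finset.range (m+1), C (W a e m k) * ∏ i ∈ Finset.range k, (X - C (a i)) := by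
  induction m with
  | zero => simp [W]
  | succ m ih =>
    rw [Finset.prod_range_succ, ih, Finset.sum_mul]
    have key : ∀ k : ℕ, (C (W a e m k) * ∏ i ∈ Finset.range k, (X - C (a i))) * (X - C (e m)) =
        C (W a e m k) * ∏ i ∈ Finset.range (k+1), (X - C (a i)) +
        C ((a k - e m) * W a e m k) * ∏ i ∈ Finset.range k, (X - C (a i)) := by
      intro k
      rw [Finset.prod_range_succ]
      simp only [map_mul, map_sub]
      ring
    simp only [key]
    rw [Finset.sum_add_distrib]
    have hB : (∑ k ∈ Finset.range (m+1),
          C ((a k - e m) * W a e m k) * ∏ i ∈ Finset.range k, (X - C (a i))) =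
        ∑ k ∈ Finset.range (m+2),
          C ((a k - e m) * W a e m k) * ∏ i ∈ Finset.range k, (X - C (a i)) := by
      rw [Finset.sum_range_succ (n := m+1)]
      rw [Wzero a e m (m+1) (by omega)]
      simp
    rw [hB, Finset.sum_range_succ' _ (m+1)]
    conv_rhs => rw [Finset.sum_range_succ' _ (m+1)]
    have hW0 : W a e (m+1) 0 = (a 0 - e m) * W a e m 0 := rfl
    have hWs : ∀ j : ℕ, W a e (m+1) (j+1) = W a e m j + (a (j+1) - e m) * W a e m (j+1) :=
      fun j => rfl
    simp only [hW0, hWs, map_add, add_mul, map_mul]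
    rw [Finset.sum_add_distrib]
    ring

/-- Any change-of-basis matrix agrees with the explicit recursion `W`. -/
lemma cob_eq (n : ℕ) (a e : ℕ → ℝ) (M : Matrix (Fin (n+1)) (Fin (n+1)) ℝ)
    (hM : IsCOB n a e M) (m k : Fin (n+1)) : M m k = W a e (m:ℕ) (k:ℕ) := by
  have h2 : (∏ i ∈ Finset.range ((m:ℕ)), (X - C (e i))) =
      ∑ k : Fin (n+1), C (W a e (m:ℕ) ((k:ℕ))) * ∏ i ∈ Finset.range ((k:ℕ)), (X - C (a i)) := by
    rw [expand a e (m:ℕ)]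
    rw [Fin.sum_univ_eq_sum_range
      (fun k => C (W a e (m:ℕ) k) * ∏ i ∈ Finset.range k, (X - C (a i))) (n+1)]
    apply Finset.sum_subset
    · exact Finset.range_subset_range.mpr (by have := m.isLt; omega)
    · intro x hx hnx
      rw [Finset.mem_range] at hx hnx
      rw [Wzero a e (m:ℕ) x (by omega)]
      simp
  have h1 := hM m
  have key := uniq n a (fun k => M m k - W a e (m:ℕ) ((k:ℕ))) (by
    simp only [map_sub, sub_mul]
    rw [Finset.sum_sub_distrib, ← h1, ← h2, sub_self])
  have hk : M m k - W a e (m:ℕ) ((k:ℕ)) = 0 := key k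
  linarith

lemma capF_le (a e : ℕ → ℝ) : ∀ m, capF a e m ≤ m := by
  intro m
  induction m with
  | zero => simp [capF]
  | succ m ih => rw [capF]; split <;> omega

/-- Key invariant: along a restricted-growth prefix, row `m` of `W` vanishes
below the cap index, is positive at the cap index, and is nonnegative. -/
lemma invariant (n : ℕ) (a e : ℕ → ℝ) (ha : ∀ i j, i ≤ j → j < n → a i ≤ a j) :
    ∀ m, m < n → (∀ i, i < m → e i ≤ a (capF a e i)) →
    (∀ k, k < capF a e m → W a e m k = 0) ∧ 0 < W a e m (capF a e m) ∧ ∀ k, 0 ≤ W a e m k := by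
  intro m
  induction m with
  | zero =>
    intro _ _
    refine ⟨fun k hk => by simp [capF] at hk, by simp [capF, W], ?_⟩
    intro k
    match k with
    | 0 => norm_num [W]
    | k+1 => norm_num [W]
  | succ m ih =>
    intro hm hrg
    obtain ⟨Z, P, NN⟩ := ih (by omega) (fun i hi => hrg i (by omega))
    have hem : e m ≤ a (capF a e m) := hrg m (by omega)
    have hfm : capF a e m ≤ m := capF_le a e m
    have hfac : ∀ k, capF a e m ≤ k → k < n → 0 ≤ a k - e m := by
      intro k h1 h2
      have := ha (capF a e m) k h1 h2
      linarith
    have NN' : ∀ k, 0 ≤ W a e (m+1) k := by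
      intro k
      match k with
      | 0 =>
        show 0 ≤ (a 0 - e m) * W a e m 0
        rcases Nat.eq_zero_or_pos (capF a e m) with h0 | h0
        · exact mul_nonneg (hfac 0 (by omega) (by omega)) (NN 0)
        · rw [Z 0 h0]; simp
      | k+1 =>
        show 0 ≤ W a e m k + (a (k+1) - e m) * W a e m (k+1)
        have h1 : 0 ≤ W a e m k := NN k
        have h2 : 0 ≤ (a (k+1) - e m) * W a e m (k+1) := by
          rcases lt_or_ge (k+1) (capF a e m) with h | h
          · rw [Z (k+1) h]; simp
          · rcases lt_or_ge m (k+1) with h' | h'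
            · rw [Wzero a e m (k+1) h']; simp
            · exact mul_nonneg (hfac (k+1) h (by omega)) (NN (k+1))
        linarith
    by_cases he : e m = a (capF a e m)
    · have hcf : capF a e (m+1) = capF a e m + 1 := by rw [capF, if_pos he]
      refine ⟨?_, ?_, NN'⟩
      · intro k hk
        rw [hcf] at hk
        match k with
        | 0 =>
          show (a 0 - e m) * W a e m 0 = 0
          rcases Nat.eq_zero_or_pos (capF a e m) with h0 | h0
          · rw [h0] at he; rw [he]; ring
          · rw [Z 0 h0]; ring
        | k+1 =>
          show W a e m k + (a (k+1) - e m) * W a e m (k+1) = 0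
          have h1 : W a e m k = 0 := Z k (by omega)
          rcases lt_or_ge (k+1) (capF a e m) with h | h
          · rw [h1, Z (k+1) h]; ring
          · have heq : k+1 = capF a e m := by omega
            have hz : a (k+1) - e m = 0 := by rw [heq, he]; ring
            rw [h1, hz]; ring
      · rw [hcf]
        show 0 < W a e m (capF a e m) + (a (capF a e m + 1) - e m) * W a e m (capF a e m + 1)
        have h2 : 0 ≤ (a (capF a e m + 1) - e m) * W a e m (capF a e m + 1) := by
          rcases lt_or_ge m (capF a e m + 1) with h' | h'
          · rw [Wzero a e m _ h']; simp
          · exact mul_nonneg (hfac _ (by omega) (by omega)) (NN _)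
        linarith
    · have hlt : e m < a (capF a e m) := lt_of_le_of_ne hem he
      have hcf : capF a e (m+1) = capF a e m := by rw [capF, if_neg he]
      refine ⟨?_, ?_, NN'⟩
      · intro k hk
        rw [hcf] at hk
        match k with
        | 0 =>
          show (a 0 - e m) * W a e m 0 = 0
          rw [Z 0 (by omega)]; ring
        | k+1 =>
          show W a e m k + (a (k+1) - e m) * W a e m (k+1) = 0
          rw [Z k (by omega), Z (k+1) (by omega)]; ring
      · rw [hcf]
        rcases Nat.eq_zero_or_pos (capF a e m) with h0 | h0
        · rw [h0]
          show 0 < (a 0 - e m) * W a e m 0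
          rw [h0] at hlt P
          exact mul_pos (by linarith) P
        · obtain ⟨j, hj⟩ : ∃ j, capF a e m = j + 1 := ⟨capF a e m - 1, by omega⟩
          rw [hj]
          show 0 < W a e m j + (a (j+1) - e m) * W a e m (j+1)
          have h1 : W a e m j = 0 := Z j (by omega)
          have h2 : 0 < (a (j+1) - e m) * W a e m (j+1) := by
            rw [← hj]
            exact mul_pos (by linarith) P
          linarith

theorem statement2 (n : ℕ) (a e : ℕ → ℝ)
    (ha : ∀ i j, i ≤ j → j < n → a i ≤ a j)
    (M : Matrix (Fin (n+1)) (Fin (n+1)) ℝ) (hM : IsCOB n a e M)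
    (h : ¬ IsRGCap n a e) :
    ∃ m k : Fin (n+1), M m k < 0 := by
  classical
  unfold IsRGCap at h
  push_neg at h
  have hex : ∃ i, i < n ∧ a (capF a e i) < e i := h
  set i0 := Nat.find hex with hi0def
  obtain ⟨hi0n, hi0lt⟩ := Nat.find_spec hex
  have hrg : ∀ i, i < i0 → e i ≤ a (capF a e i) := by
    intro i hi
    have hmin := Nat.find_min hex hi
    push_neg at hmin
    exact hmin (by omega)
  obtain ⟨Z, P, NN⟩ := invariant n a e ha i0 hi0n hrg
  have hneg : W a e (i0+1) (capF a e i0) < 0 := by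
    rcases Nat.eq_zero_or_pos (capF a e i0) with h0 | h0
    · rw [h0]
      show (a 0 - e i0) * W a e i0 0 < 0
      rw [h0] at hi0lt P
      exact mul_neg_of_neg_of_pos (by linarith) P
    · obtain ⟨j, hj⟩ : ∃ j, capF a e i0 = j + 1 := ⟨capF a e i0 - 1, by omega⟩
      rw [hj]
      show W a e i0 j + (a (j+1) - e i0) * W a e i0 (j+1) < 0
      rw [Z j (by omega)]
      have hn : (a (j+1) - e i0) * W a e i0 (j+1) < 0 := by
        rw [← hj]
        exact mul_neg_of_neg_of_pos (by linarith) P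
      linarith
  have hfle : capF a e i0 ≤ i0 := capF_le a e i0
  refine ⟨⟨i0+1, by omega⟩, ⟨capF a e i0, by omega⟩, ?_⟩
  rw [cob_eq n a e M hM]
  exact hneg
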